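/- Let T = (D, M) be a thermodynamic binding network with monomer matrix M_T, and let c be a monomer collection of T with M_T c >= 0 componentwise. Suppose there exist nonempty (nonzero) monomer collections c_1, c_2 in ℕ^M such that c_1 + c_2 = c, M_T c_1 >= 0 componentwise, and M_T c_2 >= 0 componentwise. Then every stable configuration α of c satisfies S(α) > 1; that is, every stable configuration of c consists of at least two polymers. -/

import Mathlib

/-- A monomer type over a set `D` of primary domain types: for each primary
domain type it records the number of instances of that domain and of its
complementary (starred) domain on the monomer. -/
structure Monomer (D : Type) where
  prim : D → ℕ
  star : D → ℕ

/-- Instances of primary domains in the monomer collection `mon : I → Monomer D`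
(`I` indexes the individual monomers). -/
def PrimInst {D I : Type} (mon : I → Monomer D) : Type :=
  Σ i : I, Σ x : D, Fin ((mon i).prim x)

/-- Instances of complementary (starred) domains in the collection `mon`. -/
def StarInst {D I : Type} (mon : I → Monomer D) : Type :=
  Σ i : I, Σ x : D, Fin ((mon i).star x)

/-- A configuration of the monomer collection `mon`: a matching between primary
domain instances and complementary domain instances of the same domain type. -/
structure Config {D I : Type} (mon : I → Monomer D) where
  bond : PrimInst mon → Option (StarInst mon)
  inj : ∀ p q s, bond p = some s → bond q = some s → p = q
  compat : ∀ p s, bond p = some s → p.2.1 = s.2.1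

namespace Config

variable {D I : Type} {mon : I → Monomer D}

/-- A configuration is saturated if no primary domain instance of some type and
complementary instance of the same type are both unmatched. -/
def Saturated (α : Config mon) : Prop :=
  ¬ ∃ (p : PrimInst mon) (s : StarInst mon),
      p.2.1 = s.2.1 ∧ α.bond p = none ∧ ∀ q, α.bond q ≠ some s

/-- The monomer binding graph: vertices are monomers, with an edge between two
(distinct) monomers that share at least one bound pair of domain instances.
Its connected components are the polymers of the configuration. -/
def bindingGraph (α : Config mon) : SimpleGraph I where
  Adj i j := i ≠ j ∧ ∃ p s, α.bond p = some s ∧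
      ((p.1 = i ∧ s.1 = j) ∨ (p.1 = j ∧ s.1 = i))
  symm := by
    refine ⟨?_⟩
    rintro i j ⟨hne, p, s, hb, hor⟩
    exact ⟨hne.symm, p, s, hb, hor.symm⟩
  loopless := by
    refine ⟨?_⟩
    rintro i ⟨hne, -⟩
    exact hne rfl

/-- The entropy `S(α)`: the number of polymers (connected components). -/
noncomputable def entropy (α : Config mon) : ℕ :=
  Nat.card α.bindingGraph.ConnectedComponent

/-- A configuration is stable if it is saturated and has maximal entropy among
all saturated configurations of the same monomer collection. -/
def IsStable (α : Config mon) : Prop :=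
  α.Saturated ∧ ∀ β : Config mon, β.Saturated → β.entropy ≤ α.entropy

/-- The size of a polymer (connected component) `C`: the number of monomers in it. -/
noncomputable def polymerSize (α : Config mon) (C : α.bindingGraph.ConnectedComponent) : ℕ :=
  Nat.card {i : I // α.bindingGraph.connectedComponentMk i = C}

/-- A monomer is free if its polymer contains no other monomer. -/
def Free (α : Config mon) (i : I) : Prop :=
  ∀ j : I, α.bindingGraph.Reachable i j → j = i

end Config

/-- The monomer matrix `M_T` applied to a count vector `c`: component `x` is the
number of instances of domain `x` minus the number of instances of `x*` in the
collection with `c j` copies of monomer type `Mty j`. -/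
def matVec {D : Type} {m : ℕ} (Mty : Fin m → Monomer D) (c : Fin m → ℕ) (x : D) : ℤ :=
  ∑ j, (c j : ℤ) * (((Mty j).prim x : ℤ) - ((Mty j).star x : ℤ))

/-! ### Auxiliary machinery for the splitting construction -/

section Aux
variable {D I : Type} (mon : I → Monomer D) (P : I → Prop) [DecidablePred P]
  (e₁ : ∀ x : D, (Σ i : {i : I // P i}, Fin ((mon i.1).star x)) ↪
      (Σ i : {i : I // P i}, Fin ((mon i.1).prim x)))
  (e₂ : ∀ x : D, (Σ i : {i : I // ¬ P i}, Fin ((mon i.1).star x)) ↪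
      (Σ i : {i : I // ¬ P i}, Fin ((mon i.1).prim x)))

def splitF (s : StarInst mon) : PrimInst mon :=
  if h : P s.1 then
    ⟨(e₁ s.2.1 ⟨⟨s.1, h⟩, s.2.2⟩).1.1, s.2.1, (e₁ s.2.1 ⟨⟨s.1, h⟩, s.2.2⟩).2⟩
  else
    ⟨(e₂ s.2.1 ⟨⟨s.1, h⟩, s.2.2⟩).1.1, s.2.1, (e₂ s.2.1 ⟨⟨s.1, h⟩, s.2.2⟩).2⟩

lemma splitF_pos (s : StarInst mon) (h : P s.1) : splitF mon P e₁ e₂ s =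
    ⟨(e₁ s.2.1 ⟨⟨s.1, h⟩, s.2.2⟩).1.1, s.2.1, (e₁ s.2.1 ⟨⟨s.1, h⟩, s.2.2⟩).2⟩ := dif_pos h

lemma splitF_neg (s : StarInst mon) (h : ¬ P s.1) : splitF mon P e₁ e₂ s =
    ⟨(e₂ s.2.1 ⟨⟨s.1, h⟩, s.2.2⟩).1.1, s.2.1, (e₂ s.2.1 ⟨⟨s.1, h⟩, s.2.2⟩).2⟩ := dif_neg h

lemma splitF_snd (s : StarInst mon) : (splitF mon P e₁ e₂ s).2.1 = s.2.1 := by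
  unfold splitF
  by_cases h : P s.1
  · exact congrArg (fun q : PrimInst mon => q.2.1) (splitF_pos mon P e₁ e₂ s h)
  · exact congrArg (fun q : PrimInst mon => q.2.1) (splitF_neg mon P e₁ e₂ s h)

lemma splitF_part (s : StarInst mon) : P (splitF mon P e₁ e₂ s).1 ↔ P s.1 := by
  unfold splitF
  by_cases h : P s.1
  · exact (Iff.of_eq (congrArg (fun q : PrimInst mon => P q.1) (splitF_pos mon P e₁ e₂ s h))).trans
      (iff_of_true (e₁ s.2.1 ⟨⟨s.1, h⟩, s.2.2⟩).1.2 h)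
  · exact (Iff.of_eq (congrArg (fun q : PrimInst mon => P q.1) (splitF_neg mon P e₁ e₂ s h))).trans
      (iff_of_false (e₂ s.2.1 ⟨⟨s.1, h⟩, s.2.2⟩).1.2 h)

lemma pack_inj {Q : I → Prop} (x : D) :
    Function.Injective (fun b : (Σ i : {i : I // Q i}, Fin ((mon i.1).prim x)) =>
      (⟨b.1.1, x, b.2⟩ : PrimInst mon)) := by
  rintro ⟨⟨a, ha⟩, v⟩ ⟨⟨a', ha'⟩, v'⟩ h
  simp only [] at h
  obtain ⟨h1, h2⟩ := Sigma.mk.inj_iff.mp h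
  subst h1
  obtain ⟨-, h3⟩ := Sigma.mk.inj_iff.mp (eq_of_heq h2)
  subst h3
  rfl

lemma splitF_inj : Function.Injective (splitF mon P e₁ e₂) := by
  intro s s' h
  have hx : s.2.1 = s'.2.1 := by
    rw [← splitF_snd mon P e₁ e₂ s, ← splitF_snd mon P e₁ e₂ s', h]
  have hP : P s.1 ↔ P s'.1 := by
    rw [← splitF_part mon P e₁ e₂ s, ← splitF_part mon P e₁ e₂ s', h]
  obtain ⟨i, x, k⟩ := s
  obtain ⟨i', x', k'⟩ := s'
  simp only [] at hx
  subst hx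
  by_cases hp : P i
  · have hp' : P i' := hP.mp hp
    replace h := (splitF_pos mon P e₁ e₂ ⟨i, x, k⟩ hp).symm.trans
      (h.trans (splitF_pos mon P e₁ e₂ ⟨i', x, k'⟩ hp'))
    have hb : e₁ x ⟨⟨i, hp⟩, k⟩ = e₁ x ⟨⟨i', hp'⟩, k'⟩ := pack_inj mon x h
    have hq := (e₁ x).injective hb
    exact congrArg (fun q : (Σ i : {i : I // P i}, Fin ((mon i.1).star x)) =>
      (⟨q.1.1, x, q.2⟩ : StarInst mon)) hq
  · have hp' : ¬ P i' := fun hh => hp (hP.mpr hh)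
    replace h := (splitF_neg mon P e₁ e₂ ⟨i, x, k⟩ hp).symm.trans
      (h.trans (splitF_neg mon P e₁ e₂ ⟨i', x, k'⟩ hp'))
    have hb : e₂ x ⟨⟨i, hp⟩, k⟩ = e₂ x ⟨⟨i', hp'⟩, k'⟩ := pack_inj mon x h
    have hq := (e₂ x).injective hb
    exact congrArg (fun q : (Σ i : {i : I // ¬ P i}, Fin ((mon i.1).star x)) =>
      (⟨q.1.1, x, q.2⟩ : StarInst mon)) hq

open Classical

noncomputable def splitConfig : Config mon where
  bond p := if h : ∃ s, splitF mon P e₁ e₂ s = p then some h.choose else none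
  inj p q s hp hq := by
    split at hp
    · next h =>
      split at hq
      · next h' =>
        have e1 : h.choose = s := Option.some_injective _ hp
        have e2 : h'.choose = s := Option.some_injective _ hq
        rw [← h.choose_spec, ← h'.choose_spec, e1, e2]
      · exact absurd hq (by simp)
    · exact absurd hp (by simp)
  compat p s hp := by
    split at hp
    · next h =>
      have e1 : h.choose = s := Option.some_injective _ hp
      have h2 := splitF_snd mon P e₁ e₂ h.choose
      rw [h.choose_spec, e1] at h2
      exact h2
    · exact absurd hp (by simp)

lemma splitConfig_bond_iff (p : PrimInst mon) (s : StarInst mon) :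
    (splitConfig mon P e₁ e₂).bond p = some s ↔ splitF mon P e₁ e₂ s = p := by
  constructor
  · intro hp
    have hp' : (if h : ∃ s, splitF mon P e₁ e₂ s = p then some h.choose else none) = some s := hp
    split at hp'
    · next h =>
      have e1 : h.choose = s := Option.some_injective _ hp'
      rw [← e1]
      exact h.choose_spec
    · exact absurd hp' (by simp)
  · intro hf
    have h : ∃ s', splitF mon P e₁ e₂ s' = p := ⟨s, hf⟩
    have e1 : h.choose = s := splitF_inj mon P e₁ e₂ (h.choose_spec.trans hf.symm)
    show (if h : ∃ s, splitF mon P e₁ e₂ s = p then some h.choose else none) = some s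
    rw [dif_pos h, e1]

lemma splitConfig_saturated : (splitConfig mon P e₁ e₂).Saturated := by
  rintro ⟨p, s, -, -, hall⟩
  exact hall (splitF mon P e₁ e₂ s)
    ((splitConfig_bond_iff mon P e₁ e₂ _ s).mpr rfl)

end Aux

section Count
variable {m : ℕ}

lemma card_fin_lt (n a : ℕ) (h : a ≤ n) :
    Fintype.card {k : Fin n // k.val < a} = a := by
  rw [Fintype.card_congr
    (⟨fun s => ⟨s.1.1, s.2⟩, fun k => ⟨⟨k.1, lt_of_lt_of_le k.2 h⟩, k.2⟩,
      fun s => rfl, fun k => rfl⟩ : {k : Fin n // k.val < a} ≃ Fin a)]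
  exact Fintype.card_fin a

lemma card_fin_not_lt (n a : ℕ) (h : a ≤ n) :
    Fintype.card {k : Fin n // ¬ k.val < a} = n - a := by
  rw [Fintype.card_congr
    (⟨fun s => ⟨s.1.1 - a, by have := s.1.2; have := s.2; omega⟩,
      fun k => ⟨⟨a + k.1, by have := k.2; omega⟩, by simp⟩,
      fun s => Subtype.ext (Fin.ext (by have := s.2; simp; omega)),
      fun k => Fin.ext (by simp)⟩ :
      {k : Fin n // ¬ k.val < a} ≃ Fin (n - a))]
  exact Fintype.card_fin _

lemma card_sigma_part (c ct : Fin m → ℕ) (p : (Σ j : Fin m, Fin (c j)) → Prop)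
    [DecidablePred p]
    (hcard : ∀ j, Fintype.card {k : Fin (c j) // p ⟨j, k⟩} = ct j)
    (g : Fin m → ℕ) :
    Fintype.card (Σ i : {i : (Σ j : Fin m, Fin (c j)) // p i}, Fin (g i.1.1))
      = ∑ j, ct j * g j := by
  rw [Fintype.card_sigma]
  simp only [Fintype.card_fin]
  rw [← Finset.sum_subtype (Finset.univ.filter p) (by simp)
    (fun i : (Σ j : Fin m, Fin (c j)) => g i.1)]
  rw [Finset.sum_filter, ← Finset.univ_sigma_univ, Finset.sum_sigma]
  refine Finset.sum_congr rfl fun j _ => ?_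
  rw [← Finset.sum_filter]
  have key : ∑ _a ∈ Finset.filter (fun a => p ⟨j, a⟩) Finset.univ, g j = ct j * g j := by
    rw [Finset.sum_const, smul_eq_mul, ← Fintype.card_subtype, hcard]
  exact key

end Count

/-- The part predicate: instance `⟨j, k⟩` belongs to the first part iff `k < c₁ j`. -/
def PartLT {m : ℕ} (c c₁ : Fin m → ℕ) (i : Σ j : Fin m, Fin (c j)) : Prop :=
  i.2.val < c₁ i.1

instance {m : ℕ} (c c₁ : Fin m → ℕ) : DecidablePred (PartLT c c₁) :=
  fun i => Nat.decLt _ _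


/-- splitting lemma. If a monomer collection `c` with
`M_T c ≥ 0` splits as `c = c₁ + c₂` with `c₁, c₂` nonzero and
`M_T c₁ ≥ 0`, `M_T c₂ ≥ 0` componentwise, then every stable configuration of
`c` has entropy greater than 1, i.e., consists of at least two polymers. -/
theorem stmt2 (D : Type) (m : ℕ) (Mty : Fin m → Monomer D)
    (hne : ∀ j, ∃ x, 0 < (Mty j).prim x + (Mty j).star x)
    (c c₁ c₂ : Fin m → ℕ)
    (hc : ∀ x, 0 ≤ matVec Mty c x)
    (h₁ : c₁ ≠ 0) (h₂ : c₂ ≠ 0) (hsum : c₁ + c₂ = c)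
    (hc₁ : ∀ x, 0 ≤ matVec Mty c₁ x) (hc₂ : ∀ x, 0 ≤ matVec Mty c₂ x)
    (α : Config (fun i : (Σ j : Fin m, Fin (c j)) => Mty i.1))
    (hα : α.IsStable) :
    1 < α.entropy := by
  have hcsum : ∀ j, c₁ j + c₂ j = c j := fun j => congrFun hsum j
  have hle : ∀ j, c₁ j ≤ c j := fun j => by have := hcsum j; omega
  set mon : (Σ j : Fin m, Fin (c j)) → Monomer D := fun i => Mty i.1 with hmon
  set P : (Σ j : Fin m, Fin (c j)) → Prop := PartLT c c₁ with hPdef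
  -- counting the two parts
  have hcard₁ : ∀ j, Fintype.card {k : Fin (c j) // P ⟨j, k⟩} = c₁ j := fun j =>
    card_fin_lt (c j) (c₁ j) (hle j)
  have hcard₂ : ∀ j, Fintype.card {k : Fin (c j) // ¬ P ⟨j, k⟩} = c₂ j := fun j => by
    have h0 := card_fin_not_lt (c j) (c₁ j) (hle j)
    have h1 : Fintype.card {k : Fin (c j) // ¬ P ⟨j, k⟩}
        = Fintype.card {k : Fin (c j) // ¬ k.val < c₁ j} := Fintype.card_congr (Equiv.refl _)
    rw [h1, h0]
    have := hcsum j; omega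
  -- the numeric inequalities
  have hineq : ∀ (ct : Fin m → ℕ), (∀ x, 0 ≤ matVec Mty ct x) → ∀ x : D,
      ∑ j, ct j * (Mty j).star x ≤ ∑ j, ct j * (Mty j).prim x := by
    intro ct hct x
    have h := hct x
    unfold matVec at h
    have h' : 0 ≤ ∑ j, ((ct j : ℤ) * ((Mty j).prim x : ℤ)
        - (ct j : ℤ) * ((Mty j).star x : ℤ)) := by
      simpa [mul_sub] using h
    rw [Finset.sum_sub_distrib, sub_nonneg] at h'
    exact_mod_cast h'
  -- choose the embeddings for the two parts
  have E1 : ∀ x : D, Nonempty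
      ((Σ i : {i : Σ j : Fin m, Fin (c j) // P i}, Fin ((mon i.1).star x)) ↪
       (Σ i : {i : Σ j : Fin m, Fin (c j) // P i}, Fin ((mon i.1).prim x))) := by
    intro x
    apply Function.Embedding.nonempty_of_card_le
    rw [card_sigma_part c c₁ P hcard₁ (fun j => (Mty j).star x),
      card_sigma_part c c₁ P hcard₁ (fun j => (Mty j).prim x)]
    exact hineq c₁ hc₁ x
  have E2 : ∀ x : D, Nonempty
      ((Σ i : {i : Σ j : Fin m, Fin (c j) // ¬ P i}, Fin ((mon i.1).star x)) ↪
       (Σ i : {i : Σ j : Fin m, Fin (c j) // ¬ P i}, Fin ((mon i.1).prim x))) := by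
    intro x
    apply Function.Embedding.nonempty_of_card_le
    rw [card_sigma_part c c₂ (fun i => ¬ P i) hcard₂ (fun j => (Mty j).star x),
      card_sigma_part c c₂ (fun i => ¬ P i) hcard₂ (fun j => (Mty j).prim x)]
    exact hineq c₂ hc₂ x
  let e₁ := fun x : D => (E1 x).some
  let e₂ := fun x : D => (E2 x).some
  -- the split configuration
  let β : Config mon := splitConfig mon P e₁ e₂
  have hsat : β.Saturated := splitConfig_saturated mon P e₁ e₂
  -- adjacency preserves the part
  have hadj : ∀ i j, β.bindingGraph.Adj i j → (P i ↔ P j) := by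
    rintro i j ⟨-, p, s, hb, hor⟩
    have hf : splitF mon P e₁ e₂ s = p := (splitConfig_bond_iff mon P e₁ e₂ p s).mp hb
    have h1 : P p.1 ↔ P s.1 := by rw [← hf]; exact splitF_part mon P e₁ e₂ s
    rcases hor with ⟨h2, h3⟩ | ⟨h2, h3⟩
    · rw [← h2, ← h3]; exact h1
    · rw [← h2, ← h3]; exact h1.symm
  have hwalk : ∀ {i j}, β.bindingGraph.Walk i j → (P i ↔ P j) := by
    intro i j w
    induction w with
    | nil => exact Iff.rfl
    | cons a _ ih => exact (hadj _ _ a).trans ih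
  -- two monomers in different parts
  obtain ⟨j₁, hj₁⟩ := Function.ne_iff.mp h₁
  obtain ⟨j₂, hj₂⟩ := Function.ne_iff.mp h₂
  have hj₁' : 0 < c₁ j₁ := by simpa [Nat.pos_iff_ne_zero] using hj₁
  have hj₂' : 0 < c₂ j₂ := by simpa [Nat.pos_iff_ne_zero] using hj₂
  let i₁ : Σ j : Fin m, Fin (c j) := ⟨j₁, ⟨0, by have := hcsum j₁; omega⟩⟩
  let i₂ : Σ j : Fin m, Fin (c j) := ⟨j₂, ⟨c₁ j₂, by have := hcsum j₂; omega⟩⟩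
  have hP1 : P i₁ := by show (0 : ℕ) < c₁ j₁; exact hj₁'
  have hP2 : ¬ P i₂ := by show ¬ c₁ j₂ < c₁ j₂; omega
  have hdiff : β.bindingGraph.connectedComponentMk i₁ ≠
      β.bindingGraph.connectedComponentMk i₂ := by
    intro hcc
    obtain ⟨w⟩ := SimpleGraph.ConnectedComponent.exact hcc
    exact hP2 ((hwalk w).mp hP1)
  have hnt : Nontrivial β.bindingGraph.ConnectedComponent := ⟨⟨_, _, hdiff⟩⟩
  have hfin : Finite β.bindingGraph.ConnectedComponent := Quot.finite _
  have h2 : 1 < β.entropy := Finite.one_lt_card_iff_nontrivial.mpr hnt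
  exact lt_of_lt_of_le h2 (hα.2 β hsat)
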